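/- Let G be a bipartite graph with bipartition A ∪ B all of whose edges are arcs coloured from [n], and let Γ act transitively on arc colours and directions. Let G' be the 2n-edge-coloured graph replacing an arc of colour i from A to B by an edge of colour i⁺ and an arc of colour i from B to A by an edge of colour i⁻, and let Γ' be the corresponding group on 2n colours. Then G admits a Γ-switchable homomorphism to the single-arc tournament T_2^i if and only if G' admits a Γ'-switchable homomorphism to K_2^{i⁺}. -/

import Mathlib

open Equiv

/-- An arc-coloured graph (a `(0,n)`-mixed graph): `G u v = some i` records an arc from
`u` to `v` of colour `i`. -/
abbrev ArcG (V : Type) (n : ℕ) := V → V → Option (Fin n)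

/-- `σ` comes from a pair `(β, γ₁, …, γₙ) ∈ S_n × S_2ⁿ`: the new colour of an arc does
not depend on its direction. -/
def Consistent {n : ℕ} (σ : Perm (Fin n × Bool)) : Prop :=
  ∀ i : Fin n, (σ (i, true)).1 = (σ (i, false)).1

/-- Given the arc entries `a = G u v` and `b = G v u`, the new entry `u → v` after acting
by `σ` on (colour, direction relative to `(u,v)`) pairs. -/
def arcSwitch {n : ℕ} (σ : Perm (Fin n × Bool)) (a b : Option (Fin n)) : Option (Fin n) :=
  match a with
  | some i => if (σ (i, true)).2 = true then some (σ (i, true)).1 else none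
  | none =>
    match b with
    | some i => if (σ (i, false)).2 = true then some (σ (i, false)).1 else none
    | none => none

/-- Switching the arc-coloured graph `G` at vertex `v` with respect to `σ`, which
permutes the colours and directions of the incident arcs. -/
def ArcG.switch {V : Type} [DecidableEq V] {n : ℕ} (G : ArcG V n) (v : V)
    (σ : Perm (Fin n × Bool)) : ArcG V n :=
  fun x y => if x = v ∨ y = v then arcSwitch σ (G x y) (G y x) else G x y

/-- Switching with respect to a sequence of (vertex, group element) pairs, in order. -/
def ArcG.switchSeq {V : Type} [DecidableEq V] {n : ℕ} (G : ArcG V n) :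
    List (V × Perm (Fin n × Bool)) → ArcG V n
  | [] => G
  | (v, σ) :: rest => (G.switch v σ).switchSeq rest

/-- `G` admits a `Γ`-switchable homomorphism to the single-arc tournament `T₂^i`
(vertices `false`, `true` and one arc `false → true` of colour `i`). -/
def SwHomT2 {V : Type} [DecidableEq V] {n : ℕ} (Γ : Subgroup (Perm (Fin n × Bool)))
    (G : ArcG V n) (i : Fin n) : Prop :=
  ∃ L, (∀ p ∈ L, p.2 ∈ Γ) ∧ ∃ f : V → Bool,
    ∀ u v j, G.switchSeq L u v = some j → f u = false ∧ f v = true ∧ j = i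

/-- A `2n`-edge-coloured graph, the `2n` colours `{1⁺,1⁻,…,n⁺,n⁻}` being encoded as
`Fin n × Bool`. -/
abbrev EC2 (V : Type) (n : ℕ) := V → V → Option (Fin n × Bool)

/-- Switching an edge-coloured graph at vertex `v`: apply `σ` to the colours of all
incident edges. -/
def EC2.switch {V : Type} [DecidableEq V] {n : ℕ} (G : EC2 V n) (v : V)
    (σ : Perm (Fin n × Bool)) : EC2 V n :=
  fun x y => if x = v ∨ y = v then (G x y).map σ else G x y

/-- Switching with respect to a sequence, in order. -/
def EC2.switchSeq {V : Type} [DecidableEq V] {n : ℕ} (G : EC2 V n) :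
    List (V × Perm (Fin n × Bool)) → EC2 V n
  | [] => G
  | (v, σ) :: rest => (G.switch v σ).switchSeq rest

/-- `G` admits a `Γ'`-switchable homomorphism to `K₂^c`, the single edge of colour `c`. -/
def SwHomK2 {V : Type} [DecidableEq V] {n : ℕ} (Γ : Subgroup (Perm (Fin n × Bool)))
    (G : EC2 V n) (c : Fin n × Bool) : Prop :=
  ∃ L, (∀ p ∈ L, p.2 ∈ Γ) ∧ ∃ f : V → Bool,
    ∀ u v j, G.switchSeq L u v = some j → f u ≠ f v ∧ j = c

/-- Translation `F(G) = G'` of an arc-coloured bipartite graph (with parts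
`A = side⁻¹ false` and `B = side⁻¹ true`) into a `2n`-edge-coloured graph: an arc of
colour `i` from `A` to `B` becomes an edge of colour `i⁺ = (i, true)`, and an arc of
colour `i` from `B` to `A` becomes an edge of colour `i⁻ = (i, false)`. -/
def translateArc {V : Type} {n : ℕ} (side : V → Bool) (G : ArcG V n) : EC2 V n :=
  fun u v =>
    if side u = false ∧ side v = true then
      (match G u v with
       | some i => some (i, true)
       | none => (G v u).map (fun i => (i, false)))
    else if side u = true ∧ side v = false then
      (match G v u with
       | some i => some (i, true)
       | none => (G u v).map (fun i => (i, false)))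
    else none

section Aux

variable {V : Type} [DecidableEq V] {n : ℕ}

lemma consistent_flip {σ : Perm (Fin n × Bool)} (h : Consistent σ) (j : Fin n) :
    σ (j, false) = ((σ (j, true)).1, !(σ (j, true)).2) := by
  have h1 := (h j).symm
  have hne : ¬ (σ (j, false)).2 = (σ (j, true)).2 := by
    intro h2
    have : σ (j, false) = σ (j, true) := Prod.ext h1 h2
    simpa using σ.injective this
  refine Prod.ext h1 ?_
  cases hb : (σ (j, true)).2 <;> cases hb2 : (σ (j, false)).2 <;> simp_all

def Proper (G : ArcG V n) : Prop := ∀ u v, (G u v).isSome → G v u = none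

lemma switch_entry_some {G : ArcG V n} (hp : Proper G) {σ : Perm (Fin n × Bool)}
    (hc : Consistent σ) {w u v : V} {j : Fin n}
    (hw : u = w ∨ v = w) (h : G u v = some j) :
    (G.switch w σ) u v = (if (σ (j, true)).2 then some (σ (j, true)).1 else none) ∧
    (G.switch w σ) v u = (if (σ (j, true)).2 then none else some (σ (j, true)).1) := by
  have hvu : G v u = none := hp u v (by simp [h])
  have hw' : v = w ∨ u = w := hw.symm
  constructor
  · simp only [ArcG.switch, hw, if_true, arcSwitch, h]
  · simp only [ArcG.switch, hw', if_true, arcSwitch, h, hvu, consistent_flip hc j]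
    cases hd : (σ (j, true)).2 <;> simp

lemma switch_entry_none {G : ArcG V n} {σ : Perm (Fin n × Bool)} {w u v : V}
    (h : G u v = none) (h' : G v u = none) : (G.switch w σ) u v = none := by
  simp only [ArcG.switch, arcSwitch, h, h']
  split <;> rfl

lemma proper_switch {G : ArcG V n} (hp : Proper G) {σ : Perm (Fin n × Bool)}
    (hc : Consistent σ) (w : V) : Proper (G.switch w σ) := by
  intro u v hs
  by_cases hw : u = w ∨ v = w
  · rcases h : G u v with _ | j
    · rcases h' : G v u with _ | j
      · rw [switch_entry_none h h'] at hs; simp at hs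
      · have h1 := (switch_entry_some hp hc hw.symm h').1
        have h2 := (switch_entry_some hp hc hw.symm h').2
        rw [h2] at hs; rw [h1]
        cases hd : (σ (j, true)).2 <;> simp [hd] at hs ⊢
    · have h1 := (switch_entry_some hp hc hw h).1
      have h2 := (switch_entry_some hp hc hw h).2
      rw [h1] at hs; rw [h2]
      split at hs
      · simp_all
      · simp at hs
  · have hw' : ¬ (v = w ∨ u = w) := fun h => hw h.symm
    simp only [ArcG.switch, hw, hw', if_false] at hs ⊢
    exact hp u v hs

lemma switch_support {G : ArcG V n} {σ : Perm (Fin n × Bool)} {w u v : V} :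
    ((G.switch w σ) u v).isSome → (G u v).isSome ∨ (G v u).isSome := by
  simp only [ArcG.switch]
  split
  · simp only [arcSwitch]
    rcases h : G u v with _ | j
    · rcases h' : G v u with _ | j
      · simp
      · intro _; right; simp
    · intro _; left; simp
  · intro h; left; exact h

end Aux

section Aux2

variable {V : Type} [DecidableEq V] {n : ℕ}

lemma translate_switch (side : V → Bool) {G : ArcG V n} (hp : Proper G)
    (hb : ∀ u v, (G u v).isSome → side u ≠ side v)
    {σ : Perm (Fin n × Bool)} (hc : Consistent σ) (w : V) :
    translateArc side (G.switch w σ) = (translateArc side G).switch w σ := by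
  funext u v
  by_cases hw : u = w ∨ v = w
  · have hw' : v = w ∨ u = w := hw.symm
    rcases h1 : side u with _ | _ <;> rcases h2 : side v with _ | _
    · -- both false
      simp [translateArc, EC2.switch, h1, h2, hw]
    · -- side u = false, side v = true
      rcases h : G u v with _ | j
      · rcases h' : G v u with _ | j
        · have e1 := switch_entry_none (σ := σ) (w := w) h h'
          have e2 := switch_entry_none (σ := σ) (w := w) h' h
          simp [translateArc, EC2.switch, h1, h2, hw, e1, e2, h, h']
        · have e1 := (switch_entry_some hp hc hw' h').1
          have e2 := (switch_entry_some hp hc hw' h').2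
          simp only [translateArc, EC2.switch, h1, h2, hw, if_true, e1, e2, h, h']
          cases hd : (σ (j, true)).2 <;>
            simp [hd, consistent_flip hc j, Prod.ext_iff]
      · have e1 := (switch_entry_some hp hc hw h).1
        have e2 := (switch_entry_some hp hc hw h).2
        have h' : G v u = none := hp u v (by simp [h])
        simp only [translateArc, EC2.switch, h1, h2, hw, if_true, e1, e2, h, h']
        cases hd : (σ (j, true)).2 <;> simp [hd, Prod.ext_iff]
    · -- side u = true, side v = false
      rcases h : G v u with _ | j
      · rcases h' : G u v with _ | j
        · have e1 := switch_entry_none (σ := σ) (w := w) h h'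
          have e2 := switch_entry_none (σ := σ) (w := w) h' h
          simp [translateArc, EC2.switch, h1, h2, hw, e1, e2, h, h']
        · have e1 := (switch_entry_some hp hc hw h').1
          have e2 := (switch_entry_some hp hc hw h').2
          simp only [translateArc, EC2.switch, h1, h2, hw, if_true, e1, e2, h, h']
          cases hd : (σ (j, true)).2 <;>
            simp [hd, consistent_flip hc j, Prod.ext_iff]
      · have e1 := (switch_entry_some hp hc hw' h).1
        have e2 := (switch_entry_some hp hc hw' h).2
        have h' : G u v = none := hp v u (by simp [h])
        simp only [translateArc, EC2.switch, h1, h2, hw, if_true, e1, e2, h, h']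
        cases hd : (σ (j, true)).2 <;> simp [hd, Prod.ext_iff]
    · -- both true
      simp [translateArc, EC2.switch, h1, h2, hw]
  · have hw' : ¬ (v = w ∨ u = w) := fun h => hw h.symm
    have e1 : (G.switch w σ) u v = G u v := by simp [ArcG.switch, hw]
    have e2 : (G.switch w σ) v u = G v u := by simp [ArcG.switch, hw']
    simp [translateArc, EC2.switch, hw, e1, e2]

lemma translate_switchSeq (side : V → Bool) {G : ArcG V n} (hp : Proper G)
    (hb : ∀ u v, (G u v).isSome → side u ≠ side v)
    {L : List (V × Perm (Fin n × Bool))} (hc : ∀ p ∈ L, Consistent p.2) :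
    Proper (G.switchSeq L) ∧
    (∀ u v, ((G.switchSeq L) u v).isSome → side u ≠ side v) ∧
    translateArc side (G.switchSeq L) = (translateArc side G).switchSeq L := by
  induction L generalizing G with
  | nil => exact ⟨hp, hb, rfl⟩
  | cons p t ih =>
    obtain ⟨w, σ⟩ := p
    have hcσ : Consistent σ := hc (w, σ) List.mem_cons_self
    have hp' := proper_switch hp hcσ w
    have hb' : ∀ u v, ((G.switch w σ) u v).isSome → side u ≠ side v := fun u v h =>
      (switch_support h).elim (hb u v) (fun h' => (hb v u h').symm)
    have ht := ih hp' hb' (fun p hp => hc p (by simp [hp]))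
    refine ⟨ht.1, ht.2.1, ?_⟩
    show translateArc side ((G.switch w σ).switchSeq t)
        = ((translateArc side G).switch w σ).switchSeq t
    rw [ht.2.2, translate_switch side hp hb hcσ w]

lemma EC2.switchSeq_append (G : EC2 V n) (L1 L2 : List (V × Perm (Fin n × Bool))) :
    G.switchSeq (L1 ++ L2) = (G.switchSeq L1).switchSeq L2 := by
  induction L1 generalizing G with
  | nil => rfl
  | cons p t ih => obtain ⟨w, σ⟩ := p; exact ih _

lemma EC2.switchSeq_support {G : EC2 V n} {L : List (V × Perm (Fin n × Bool))} {u v : V} :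
    ((G.switchSeq L) u v).isSome → (G u v).isSome := by
  induction L generalizing G with
  | nil => exact id
  | cons p t ih =>
    obtain ⟨w, σ⟩ := p
    intro h
    have h2 := ih h
    by_cases hw : u = w ∨ v = w
    · simpa [EC2.switch, hw] using h2
    · simpa [EC2.switch, hw] using h2

lemma switchSeq_const (τ : Perm (Fin n × Bool)) :
    ∀ (l : List V) (E : EC2 V n) (u v : V), u ≠ v →
    EC2.switchSeq E (l.map fun x => (x, τ)) u v
      = (E u v).map (⇑(τ ^ (l.count u + l.count v)))
  | [], E, u, v, h => by
    show E u v = _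
    simp
  | a :: t, E, u, v, h => by
    have ih := switchSeq_const τ t (E.switch a τ) u v h
    show EC2.switchSeq (E.switch a τ) (t.map fun x => (x, τ)) u v = _
    rw [ih]
    have hstep : (E.switch a τ) u v = if u = a ∨ v = a then (E u v).map τ else E u v := rfl
    by_cases hu : u = a
    · have hv : ¬ v = a := fun hh => h (hu.trans hh.symm)
      have hcount : (a :: t).count u + (a :: t).count v
          = (t.count u + t.count v) + 1 := by
        simp [List.count_cons, hu, hv, Ne.symm hv]
        omega
      rw [hstep, if_pos (Or.inl hu), hcount, pow_succ, Option.map_map, Perm.coe_mul]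
    · by_cases hv : v = a
      · have hcount : (a :: t).count u + (a :: t).count v
            = (t.count u + t.count v) + 1 := by
          simp [List.count_cons, hu, hv, Ne.symm hu]
          omega
        rw [hstep, if_pos (Or.inr hv), hcount, pow_succ, Option.map_map, Perm.coe_mul]
      · have hcount : (a :: t).count u + (a :: t).count v = t.count u + t.count v := by
          simp [List.count_cons, hu, hv, Ne.symm hu, Ne.symm hv]
        rw [hstep, if_neg (by tauto), hcount]

end Aux2

/-- For a bipartite arc-coloured graph `G` with `Γ` acting transitively
on arc colours and directions, `G` admits a `Γ`-switchable homomorphism to `T₂^i` iff the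
translated `2n`-edge-coloured graph `G'` admits a `Γ'`-switchable homomorphism to
`K₂^{i⁺}` (here `Γ` and its isomorphic copy `Γ'` are both realised as a subgroup of the
permutations of `Fin n × Bool`). -/
theorem arc_to_edge_translation {V : Type} [Fintype V] [DecidableEq V] {n : ℕ}
    (Γ : Subgroup (Perm (Fin n × Bool))) (hcons : ∀ σ ∈ Γ, Consistent σ)
    (htr : ∀ p q : Fin n × Bool, ∃ σ ∈ Γ, σ p = q)
    (side : V → Bool) (G : ArcG V n)
    (hbip : ∀ u v, (G u v).isSome → side u ≠ side v)
    (hprop : ∀ u v, (G u v).isSome → G v u = none) (i : Fin n) :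
    SwHomT2 Γ G i ↔ SwHomK2 Γ (translateArc side G) (i, true) := by
  constructor
  · rintro ⟨L, hLΓ, f, hf⟩
    have hLc : ∀ p ∈ L, Consistent p.2 := fun p hp => hcons _ (hLΓ p hp)
    obtain ⟨hHp, hHb, hTrans⟩ := translate_switchSeq side hprop hbip hLc
    obtain ⟨τ, hτΓ, hτ⟩ := htr (i, false) (i, true)
    set H := G.switchSeq L with hH
    set C : Finset V := Finset.univ.filter (fun x => side x = true ∧ f x = false) with hC
    have hcnt : ∀ x : V, (C.toList).count x = if side x = true ∧ f x = false then 1 else 0 := by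
      intro x
      by_cases hx : side x = true ∧ f x = false
      · rw [if_pos hx]
        exact List.count_eq_one_of_mem C.nodup_toList (by simp [hC, hx])
      · rw [if_neg hx]
        refine List.count_eq_zero.mpr ?_
        simp only [Finset.mem_toList, hC, Finset.mem_filter, Finset.mem_univ, true_and]
        exact hx
    refine ⟨L ++ C.toList.map (fun x => (x, τ)), ?_, side, ?_⟩
    · intro p hp
      rcases List.mem_append.mp hp with h | h
      · exact hLΓ p h
      · obtain ⟨x, -, rfl⟩ := List.mem_map.mp h
        exact hτΓ
    · intro u v c hsome
      rw [EC2.switchSeq_append, ← hTrans] at hsome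
      have huv : u ≠ v := by
        rintro rfl
        have h2 := EC2.switchSeq_support (u := u) (v := u)
          (L := C.toList.map (fun x => (x, τ))) (by rw [hsome]; rfl)
        simp [translateArc] at h2
      rw [switchSeq_const τ _ _ u v huv] at hsome
      obtain ⟨c₀, hc₀, hmap⟩ := Option.map_eq_some_iff.mp hsome
      rw [hcnt u, hcnt v] at hmap
      refine ⟨?_, ?_⟩
      · exact fun hss => by
          simp only [translateArc, hss] at hc₀
          rcases hb : side v with _ | _ <;> simp [hb] at hc₀
      · rcases h1 : side u with _ | _ <;> rcases h2 : side v with _ | _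
        · simp [translateArc, h1, h2] at hc₀
        · -- A → B direction pair
          simp only [translateArc, h1, h2, true_and, and_true, if_true, if_pos] at hc₀
          rcases hH1 : H u v with _ | j
          · rcases hH2 : H v u with _ | j
            · simp [hH1, hH2] at hc₀
            · obtain ⟨hfv, hfu, hji⟩ := hf v u j hH2
              simp only [hH1, hH2, Option.map_some] at hc₀
              obtain rfl : c₀ = (j, false) := by
                cases hc₀; rfl
              simp only [h1, h2, hfu, hfv] at hmap
              norm_num at hmap
              rw [← hmap, hji, hτ]
          · obtain ⟨hfu, hfv, hji⟩ := hf u v j hH1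
            simp only [hH1] at hc₀
            obtain rfl : c₀ = (j, true) := by cases hc₀; rfl
            simp only [h1, h2, hfu, hfv] at hmap
            norm_num at hmap
            rw [← hmap, hji]
        · -- B → A direction pair
          simp only [translateArc, h1, h2, true_and, and_true, false_and, and_false,
            if_false, if_true, if_pos] at hc₀
          rcases hH1 : H v u with _ | j
          · rcases hH2 : H u v with _ | j
            · simp [hH1, hH2] at hc₀
            · obtain ⟨hfu, hfv, hji⟩ := hf u v j hH2
              simp only [hH1, hH2, Option.map_some] at hc₀
              obtain rfl : c₀ = (j, false) := by cases hc₀; rfl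
              simp only [h1, h2, hfu, hfv] at hmap
              norm_num at hmap
              rw [← hmap, hji, hτ]
          · obtain ⟨hfv, hfu, hji⟩ := hf v u j hH1
            simp only [hH1] at hc₀
            obtain rfl : c₀ = (j, true) := by cases hc₀; rfl
            simp only [h1, h2, hfu, hfv] at hmap
            norm_num at hmap
            rw [← hmap, hji]
        · simp [translateArc, h1, h2] at hc₀
  · rintro ⟨L, hLΓ, f, hf⟩
    have hLc : ∀ p ∈ L, Consistent p.2 := fun p hp => hcons _ (hLΓ p hp)
    obtain ⟨hHp, hHb, hTrans⟩ := translate_switchSeq side hprop hbip hLc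
    refine ⟨L, hLΓ, side, ?_⟩
    intro u v j h
    have hside : side u ≠ side v := hHb u v (by simp [h])
    rcases h1 : side u with _ | _ <;> rcases h2 : side v with _ | _
    · exact absurd (h1.trans h2.symm) hside
    · have ht : translateArc side (G.switchSeq L) u v = some (j, true) := by
        simp [translateArc, h1, h2, h]
      have h3 := hf u v (j, true) (by rw [← hTrans]; exact ht)
      have : j = i := by
        have := h3.2
        simpa using congrArg Prod.fst this
      exact ⟨rfl, rfl, this⟩
    · have hvu : G.switchSeq L v u = none := hHp u v (by simp [h])
      have ht : translateArc side (G.switchSeq L) u v = some (j, false) := by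
        simp [translateArc, h1, h2, h, hvu]
      have h3 := hf u v (j, false) (by rw [← hTrans]; exact ht)
      have := congrArg Prod.snd h3.2
      simp at this
    · exact absurd (h1.trans h2.symm) hside
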